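/- There exists a constant C > 0 such that for all real ξ with |ξ| ≥ 1 and any fixed τ > 0, |∫_0^τ θ^{-1/2} e^{Ξ²(θ-τ)} dθ − 1/(√τ Ξ²)| ≤ C ξ^{-4}, where Ξ = σ₀ ξ / √2 for a fixed constant σ₀ > 0. -/

import Mathlib

open MeasureTheory Real intervalIntegral

lemma aux_int_one_div_sqrt (b : ℝ) (hb : 0 ≤ b) :
    IntervalIntegrable (fun θ : ℝ => 1 / Real.sqrt θ) volume 0 b := by
  have h1 : IntervalIntegrable (fun θ : ℝ => θ ^ (-(1/2) : ℝ)) volume 0 b :=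
    intervalIntegrable_rpow' (by norm_num)
  refine h1.congr ?_
  show Set.EqOn _ _ (Set.uIoc 0 b)
  intro θ hθ
  rw [Set.uIoc_of_le hb] at hθ
  show θ ^ (-(1/2) : ℝ) = 1 / Real.sqrt θ
  rw [Real.rpow_neg hθ.1.le, Real.sqrt_eq_rpow]; exact (one_div _).symm

lemma aux_int_one_div_sqrt_val (b : ℝ) (hb : 0 ≤ b) :
    (∫ θ in (0:ℝ)..b, 1 / Real.sqrt θ) = 2 * Real.sqrt b := by
  have h : (∫ θ in (0:ℝ)..b, 1 / Real.sqrt θ) = ∫ θ in (0:ℝ)..b, θ ^ (-(1/2) : ℝ) := by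
    apply intervalIntegral.integral_congr
    intro θ hθ
    rw [Set.uIcc_of_le hb] at hθ
    show 1 / Real.sqrt θ = θ ^ (-(1/2) : ℝ)
    rcases eq_or_lt_of_le hθ.1 with h|h
    · rw [← h]; simp [Real.zero_rpow (by norm_num : (-(1/2):ℝ) ≠ 0)]
    · rw [Real.rpow_neg h.le, Real.sqrt_eq_rpow, one_div]
  rw [h, integral_rpow (Or.inl (by norm_num))]
  rw [Real.sqrt_eq_rpow]
  norm_num
  ring

lemma aux_int_exp_shift (a τ c d : ℝ) (ha : a ≠ 0) :
    (∫ θ in c..d, Real.exp (a*(θ-τ))) = (Real.exp (a*(d-τ)) - Real.exp (a*(c-τ)))/a := by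
  have key : ∀ θ : ℝ, HasDerivAt (fun x => Real.exp (a*(x-τ))/a) (Real.exp (a*(θ-τ))) θ := by
    intro θ
    have h1 : HasDerivAt (fun x : ℝ => a*(x-τ)) a θ := by
      simpa using ((hasDerivAt_id θ).sub_const τ).const_mul a
    have h2 := h1.exp.div_const a
    simpa [mul_div_assoc, mul_comm, ne_eq, ha, mul_div_cancel_left₀] using h2
  rw [intervalIntegral.integral_eq_sub_of_hasDerivAt (fun θ _ => key θ)
    ((Continuous.intervalIntegrable (by continuity) _ _))]
  ring

lemma aux_int_texp (a τ : ℝ) (ha : 0 < a) (hτ : 0 < τ) :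
    (∫ θ in (τ/2)..τ, (τ-θ) * Real.exp (a*(θ-τ))) ≤ 1/a^2 := by
  have key : ∀ θ : ℝ, HasDerivAt (fun x => ((τ-x)/a + 1/a^2) * Real.exp (a*(x-τ)))
      ((τ-θ) * Real.exp (a*(θ-τ))) θ := by
    intro θ
    have h1 : HasDerivAt (fun x : ℝ => a*(x-τ)) a θ := by
      simpa using ((hasDerivAt_id θ).sub_const τ).const_mul a
    have h2 := h1.exp
    have h3 : HasDerivAt (fun x : ℝ => (τ-x)/a + 1/a^2) (-1/a) θ := by
      have := (((hasDerivAt_id θ).const_sub τ).div_const a).add_const (1/a^2)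
      simpa using this
    have h4 : HasDerivAt (fun x => ((τ-x)/a + 1/a^2) * Real.exp (a*(x-τ))) _ θ := h3.mul h2
    convert h4 using 1
    field_simp [ha.ne']
    ring
  rw [intervalIntegral.integral_eq_sub_of_hasDerivAt (fun θ _ => key θ)
    ((Continuous.intervalIntegrable (by continuity) _ _))]
  have hs : τ - τ/2 = τ/2 := by ring
  rw [hs]
  have h5 : 0 ≤ ((τ/2)/a + 1/a^2) * Real.exp (a*(τ/2-τ)) := by positivity
  simp only [sub_self, zero_div, zero_add, mul_zero, Real.exp_zero, mul_one]
  linarith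

lemma aux_exp_sq (x : ℝ) (hx : 0 ≤ x) : x^2/4 ≤ Real.exp x := by
  have h1 : Real.exp x = Real.exp (x/2) ^ 2 := by
    rw [sq, ← Real.exp_add]; ring_nf
  have h2 := Real.add_one_le_exp (x/2)
  nlinarith [Real.exp_pos (x/2)]
set_option maxHeartbeats 1000000 in
theorem integral_inv_sqrt_asymptotic (σ₀ τ : ℝ) (hσ₀ : 0 < σ₀) (hτ : 0 < τ) :
    ∃ C > (0 : ℝ), ∀ ξ : ℝ, 1 ≤ |ξ| →
      |(∫ θ in (0 : ℝ)..τ, Real.exp ((σ₀ * ξ / Real.sqrt 2) ^ 2 * (θ - τ)) / Real.sqrt θ) -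
          1 / (Real.sqrt τ * (σ₀ * ξ / Real.sqrt 2) ^ 2)| ≤ C / ξ ^ 4 := by
  have hτ2 : (0:ℝ) < τ/2 := by linarith
  have hsτ : 0 < Real.sqrt τ := Real.sqrt_pos.2 hτ
  have hsτ2 : 0 < Real.sqrt (τ/2) := Real.sqrt_pos.2 hτ2
  set K1 : ℝ := 2 * Real.sqrt (τ/2) + (τ/2) / Real.sqrt τ with hK1
  have hK1pos : 0 < K1 := by positivity
  set K2 : ℝ := 1 / (Real.sqrt (τ/2) * τ) with hK2
  have hK2pos : 0 < K2 := by positivity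
  set C0 : ℝ := 16*K1/τ^2 + K2 + (32/σ₀^2)/(τ^2*Real.sqrt τ) with hC0
  have hC0pos : 0 < C0 := by positivity
  refine ⟨4*C0/σ₀^4, by positivity, ?_⟩
  intro ξ hξ
  have hξ2 : 1 ≤ ξ^2 := by nlinarith [sq_abs ξ, abs_nonneg ξ]
  set a : ℝ := (σ₀ * ξ / Real.sqrt 2) ^ 2 with ha_def
  have ha_eq : a = σ₀^2 * ξ^2 / 2 := by
    rw [ha_def, div_pow, mul_pow, Real.sq_sqrt (by norm_num : (0:ℝ) ≤ 2)]
  have ha0 : 0 < a := by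
    rw [ha_eq]
    nlinarith [mul_le_mul_of_nonneg_left hξ2 (sq_nonneg σ₀), sq_nonneg σ₀, mul_pos hσ₀ hσ₀]
  have halb : σ₀^2/2 ≤ a := by
    rw [ha_eq]
    nlinarith [mul_le_mul_of_nonneg_left hξ2 (sq_nonneg σ₀)]
  have ha2 : a^2 = σ₀^4 * ξ^4 / 4 := by rw [ha_eq]; ring
  have hξ4 : (0:ℝ) < ξ^4 := by nlinarith
  set f : ℝ → ℝ := fun θ => Real.exp (a*(θ-τ)) / Real.sqrt θ with hf_def
  set g : ℝ → ℝ := fun θ => Real.exp (a*(θ-τ)) / Real.sqrt τ with hg_def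
  have hconte : Continuous (fun θ : ℝ => Real.exp (a*(θ-τ))) := by continuity
  have hIf : IntervalIntegrable f volume 0 τ := by
    have h := (aux_int_one_div_sqrt τ hτ.le).continuousOn_mul
      (g := fun θ : ℝ => Real.exp (a*(θ-τ))) hconte.continuousOn
    refine h.congr (fun x _ => congrFun (?_ : (fun θ : ℝ => Real.exp (a*(θ-τ)) * (1 / Real.sqrt θ)) = f) x)
    funext θ; simp only [hf_def]; rw [mul_one_div]
  have hIg : IntervalIntegrable g volume 0 τ := (hconte.div_const _).intervalIntegrable _ _
  have hsub1 : Set.uIcc (0:ℝ) (τ/2) ⊆ Set.uIcc (0:ℝ) τ := by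
    rw [Set.uIcc_of_le hτ2.le, Set.uIcc_of_le hτ.le]
    exact Set.Icc_subset_Icc le_rfl (by linarith)
  have hsub2 : Set.uIcc (τ/2) τ ⊆ Set.uIcc (0:ℝ) τ := by
    rw [Set.uIcc_of_le (by linarith : τ/2 ≤ τ), Set.uIcc_of_le hτ.le]
    exact Set.Icc_subset_Icc hτ2.le le_rfl
  have hIfg1 : IntervalIntegrable (fun θ => f θ - g θ) volume 0 (τ/2) :=
    (hIf.sub hIg).mono_set hsub1
  have hIfg2 : IntervalIntegrable (fun θ => f θ - g θ) volume (τ/2) τ :=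
    (hIf.sub hIg).mono_set hsub2
  -- value of ∫ g
  have hg_val : (∫ θ in (0:ℝ)..τ, g θ) = (1 - Real.exp (-(a*τ))) / (Real.sqrt τ * a) := by
    rw [hg_def]
    rw [intervalIntegral.integral_div, aux_int_exp_shift a τ 0 τ (ne_of_gt ha0)]
    have e1 : a*(τ-τ) = 0 := by ring
    have e2 : a*(0-τ) = -(a*τ) := by ring
    rw [e1, e2, Real.exp_zero]
    rw [div_div, mul_comm a (Real.sqrt τ)]
  -- the key identity
  have key : (∫ θ in (0:ℝ)..τ, f θ) - 1/(Real.sqrt τ * a)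
      = (∫ θ in (0:ℝ)..τ, (f θ - g θ)) + (- (Real.exp (-(a*τ)) / (Real.sqrt τ * a))) := by
    rw [intervalIntegral.integral_sub hIf hIg, hg_val]
    ring
  -- split the middle integral
  have hsplit : (∫ θ in (0:ℝ)..τ, (f θ - g θ))
      = (∫ θ in (0:ℝ)..(τ/2), (f θ - g θ)) + ∫ θ in (τ/2)..τ, (f θ - g θ) :=
    (intervalIntegral.integral_add_adjacent_intervals hIfg1 hIfg2).symm
  set E1 : ℝ := Real.exp (-(a*(τ/2))) with hE1def
  have hE1 : E1 ≤ 16/(a^2*τ^2) := by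
    have h := aux_exp_sq (a*(τ/2)) (by positivity)
    have hp : (0:ℝ) < a^2*τ^2/16 := by positivity
    have h' : a^2*τ^2/16 ≤ Real.exp (a*(τ/2)) := by nlinarith [h]
    have h'' : (Real.exp (a*(τ/2)))⁻¹ ≤ (a^2*τ^2/16)⁻¹ := inv_anti₀ hp h'
    rw [hE1def, Real.exp_neg]
    rw [inv_div] at h''
    exact h''
  -- piece 1
  have hp1 : |∫ θ in (0:ℝ)..(τ/2), (f θ - g θ)| ≤ E1 * K1 := by
    have step1 : |∫ θ in (0:ℝ)..(τ/2), (f θ - g θ)|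
        ≤ ∫ θ in (0:ℝ)..(τ/2), |f θ - g θ| :=
      intervalIntegral.abs_integral_le_integral_abs hτ2.le
    have hIrhs : IntervalIntegrable
        (fun θ : ℝ => E1 * (1/Real.sqrt θ + 1/Real.sqrt τ)) volume 0 (τ/2) := by
      exact ((aux_int_one_div_sqrt (τ/2) hτ2.le).add
        (intervalIntegrable_const)).const_mul E1
    have step2 : (∫ θ in (0:ℝ)..(τ/2), |f θ - g θ|)
        ≤ ∫ θ in (0:ℝ)..(τ/2), E1 * (1/Real.sqrt θ + 1/Real.sqrt τ) := by
      apply intervalIntegral.integral_mono_on hτ2.le hIfg1.abs hIrhs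
      intro θ hθ
      have hθ0 : 0 ≤ θ := hθ.1
      have he : Real.exp (a*(θ-τ)) ≤ E1 := by
        rw [hE1def]
        exact Real.exp_le_exp.2 (by nlinarith [mul_nonneg ha0.le (sub_nonneg.2 hθ.2)])
      have hx : 0 ≤ Real.exp (a*(θ-τ)) / Real.sqrt θ := by positivity
      have hy : 0 ≤ Real.exp (a*(θ-τ)) / Real.sqrt τ := by positivity
      have habs : |f θ - g θ| ≤ f θ + g θ := by
        rw [abs_le]; constructor
        · simp only [hf_def, hg_def]; nlinarith
        · simp only [hf_def, hg_def]; nlinarith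
      calc |f θ - g θ| ≤ f θ + g θ := habs
        _ = Real.exp (a*(θ-τ)) * (1/Real.sqrt θ + 1/Real.sqrt τ) := by
            simp only [hf_def, hg_def, mul_add, mul_one_div]
        _ ≤ E1 * (1/Real.sqrt θ + 1/Real.sqrt τ) := by
            apply mul_le_mul_of_nonneg_right he (by positivity)
    have step3 : (∫ θ in (0:ℝ)..(τ/2), E1 * (1/Real.sqrt θ + 1/Real.sqrt τ)) = E1 * K1 := by
      rw [intervalIntegral.integral_const_mul,
        intervalIntegral.integral_add (aux_int_one_div_sqrt (τ/2) hτ2.le)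
          intervalIntegrable_const,
        aux_int_one_div_sqrt_val (τ/2) hτ2.le, intervalIntegral.integral_const]
      rw [hK1]
      rw [smul_eq_mul]
      ring_nf
    linarith [step1, step2, step3.le, step3.ge]
  -- piece 2
  have hp2 : |∫ θ in (τ/2)..τ, (f θ - g θ)| ≤ K2 * (1/a^2) := by
    have hIrhs : IntervalIntegrable
        (fun θ : ℝ => K2 * ((τ-θ) * Real.exp (a*(θ-τ)))) volume (τ/2) τ :=
      (Continuous.intervalIntegrable (by continuity) _ _)
    have step1 : |∫ θ in (τ/2)..τ, (f θ - g θ)| ≤ ∫ θ in (τ/2)..τ, |f θ - g θ| :=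
      intervalIntegral.abs_integral_le_integral_abs (by linarith)
    have step2 : (∫ θ in (τ/2)..τ, |f θ - g θ|)
        ≤ ∫ θ in (τ/2)..τ, K2 * ((τ-θ) * Real.exp (a*(θ-τ))) := by
      apply intervalIntegral.integral_mono_on (by linarith) hIfg2.abs hIrhs
      intro θ hθ
      have hθ0 : 0 < θ := lt_of_lt_of_le hτ2 hθ.1
      set s := Real.sqrt θ with hs
      set t := Real.sqrt τ with ht
      set u := Real.sqrt (τ/2) with hu
      have hs0 : 0 < s := Real.sqrt_pos.2 hθ0
      have hs2 : s^2 = θ := Real.sq_sqrt hθ0.le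
      have ht2 : t^2 = τ := Real.sq_sqrt hτ.le
      have hu2 : u^2 = τ/2 := Real.sq_sqrt hτ2.le
      have hus : u ≤ s := Real.sqrt_le_sqrt hθ.1
      have hst : s ≤ t := Real.sqrt_le_sqrt hθ.2
      have hkey : 1/s - 1/t ≤ (τ-θ)/(u*τ) := by
        rw [div_sub_div _ _ (ne_of_gt hs0) (ne_of_gt hsτ),
          div_le_div_iff₀ (by positivity) (by positivity), ← hs2, ← ht2]
        nlinarith [mul_nonneg (mul_nonneg (sub_nonneg.2 hst) (sub_nonneg.2 hus)) (sq_nonneg t),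
          mul_nonneg (mul_nonneg (sub_nonneg.2 hst) (sq_nonneg s)) hsτ.le]
      have hfg : f θ - g θ = Real.exp (a*(θ-τ)) * (1/s - 1/t) := by
        simp only [hf_def, hg_def, mul_sub, mul_one_div]; rfl
      have hfgnn : 0 ≤ f θ - g θ := by
        rw [hfg]
        apply mul_nonneg (Real.exp_nonneg _)
        have : 1/t ≤ 1/s := by apply one_div_le_one_div_of_le hs0 hst
        linarith
      rw [abs_of_nonneg hfgnn, hfg]
      calc Real.exp (a*(θ-τ)) * (1/s - 1/t) ≤ Real.exp (a*(θ-τ)) * ((τ-θ)/(u*τ)) :=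
            mul_le_mul_of_nonneg_left hkey (Real.exp_nonneg _)
        _ = K2 * ((τ-θ) * Real.exp (a*(θ-τ))) := by rw [hK2]; ring
    have step3 : (∫ θ in (τ/2)..τ, K2 * ((τ-θ) * Real.exp (a*(θ-τ)))) ≤ K2 * (1/a^2) := by
      rw [intervalIntegral.integral_const_mul]
      apply mul_le_mul_of_nonneg_left _ hK2pos.le
      have := aux_int_texp a τ ha0 hτ
      linarith [this]
    linarith
  -- piece 3
  have hp3 : Real.exp (-(a*τ)) / (Real.sqrt τ * a) ≤ (32/σ₀^2)/(τ^2*Real.sqrt τ) * (1/a^2) := by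
    have h1 : Real.exp (-(a*τ)) ≤ E1 := by
      rw [hE1def]
      exact Real.exp_le_exp.2 (neg_le_neg (mul_le_mul_of_nonneg_left (by linarith) ha0.le))
    have h2 : Real.exp (-(a*τ)) ≤ 16/(a^2*τ^2) := h1.trans hE1
    have h3 : 1/a ≤ 2/σ₀^2 := by
      rw [div_le_div_iff₀ ha0 (by positivity)]; linarith [halb]
    have h4 : Real.exp (-(a*τ)) / (Real.sqrt τ * a)
        = Real.exp (-(a*τ)) * (1/Real.sqrt τ) * (1/a) := by ring
    rw [h4]
    have h5 : Real.exp (-(a*τ)) * (1/Real.sqrt τ) ≤ 16/(a^2*τ^2) * (1/Real.sqrt τ) :=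
      mul_le_mul_of_nonneg_right h2 (by positivity)
    calc Real.exp (-(a*τ)) * (1/Real.sqrt τ) * (1/a)
        ≤ (16/(a^2*τ^2) * (1/Real.sqrt τ)) * (2/σ₀^2) := by
          apply mul_le_mul h5 h3 (by positivity) (by positivity)
      _ = (32/σ₀^2)/(τ^2*Real.sqrt τ) * (1/a^2) := by ring
  -- assembly
  have hfinal : |(∫ θ in (0:ℝ)..τ, f θ) - 1/(Real.sqrt τ * a)| ≤ C0 * (1/a^2) := by
    rw [key, hsplit]
    have htri : |(∫ θ in (0:ℝ)..(τ/2), (f θ - g θ)) + (∫ θ in (τ/2)..τ, (f θ - g θ))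
        + (- (Real.exp (-(a*τ)) / (Real.sqrt τ * a)))|
        ≤ |∫ θ in (0:ℝ)..(τ/2), (f θ - g θ)| + |∫ θ in (τ/2)..τ, (f θ - g θ)|
          + Real.exp (-(a*τ)) / (Real.sqrt τ * a) := by
      have e1 := abs_add_le ((∫ θ in (0:ℝ)..(τ/2), (f θ - g θ)) + (∫ θ in (τ/2)..τ, (f θ - g θ)))
        (- (Real.exp (-(a*τ)) / (Real.sqrt τ * a)))
      have e2 := abs_add_le (∫ θ in (0:ℝ)..(τ/2), (f θ - g θ)) (∫ θ in (τ/2)..τ, (f θ - g θ))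
      have e3 : |(- (Real.exp (-(a*τ)) / (Real.sqrt τ * a)))|
          = Real.exp (-(a*τ)) / (Real.sqrt τ * a) := by
        rw [abs_neg, abs_of_nonneg]; positivity
      linarith
    have hE1K1 : E1 * K1 ≤ 16*K1/τ^2 * (1/a^2) := by
      calc E1 * K1 ≤ 16/(a^2*τ^2) * K1 := mul_le_mul_of_nonneg_right hE1 hK1pos.le
        _ = 16*K1/τ^2 * (1/a^2) := by ring
    have := htri.trans (by linarith [hp1, hp2, hp3, hE1K1] :
      |∫ θ in (0:ℝ)..(τ/2), (f θ - g θ)| + |∫ θ in (τ/2)..τ, (f θ - g θ)|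
          + Real.exp (-(a*τ)) / (Real.sqrt τ * a) ≤ C0 * (1/a^2))
    exact this
  have hC : C0 * (1/a^2) = (4*C0/σ₀^4) / ξ^4 := by
    rw [ha2]; ring
  calc |(∫ θ in (0:ℝ)..τ, f θ) - 1/(Real.sqrt τ * a)| ≤ C0 * (1/a^2) := hfinal
    _ = (4*C0/σ₀^4) / ξ^4 := hC
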